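/- The graph 4C₃ (four vertex-disjoint triangles on 12 vertices) is uniquely embeddable in its complement: it admits an embedding, and all graphs 4C₃ ⊕ σ(4C₃) over embeddings σ are pairwise isomorphic. -/

import Mathlib

open SimpleGraph

/-- The cycle graph on `ZMod n`: `i` and `j` adjacent iff they differ by one. -/
def CycGraph (n : ℕ) : SimpleGraph (ZMod n) where
  Adj i j := i ≠ j ∧ (i = j + 1 ∨ j = i + 1)
  symm := by refine ⟨?_⟩; rintro i j ⟨hne, h⟩; exact ⟨hne.symm, h.symm⟩
  loopless := by refine ⟨?_⟩; rintro i ⟨hne, _⟩; exact hne rfl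

/-- `σ` is an embedding of `G` into its complement. -/
def IsGraphEmbedding {V : Type*} (G : SimpleGraph V) (σ : Equiv.Perm V) : Prop :=
  ∀ x y, G.Adj x y → ¬ G.Adj (σ x) (σ y)

/-- The edge sum `G ⊕ σ(G)`. -/
def EdgeSum {V : Type*} (G : SimpleGraph V) (σ : Equiv.Perm V) : SimpleGraph V :=
  G ⊔ G.map σ.toEmbedding

/-- Vertex-disjoint union of two graphs. -/
def DisjUnion {α β : Type*} (G : SimpleGraph α) (H : SimpleGraph β) :
    SimpleGraph (α ⊕ β) where
  Adj x y :=
    (∃ a b, x = Sum.inl a ∧ y = Sum.inl b ∧ G.Adj a b) ∨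
    (∃ a b, x = Sum.inr a ∧ y = Sum.inr b ∧ H.Adj a b)
  symm := by
    refine ⟨?_⟩
    rintro x y (⟨a, b, rfl, rfl, h⟩ | ⟨a, b, rfl, rfl, h⟩)
    · exact Or.inl ⟨b, a, rfl, rfl, h.symm⟩
    · exact Or.inr ⟨b, a, rfl, rfl, h.symm⟩
  loopless := by
    refine ⟨?_⟩
    rintro x (⟨a, b, rfl, h, hadj⟩ | ⟨a, b, rfl, h, hadj⟩) <;>
      · cases h; exact hadj.ne rfl

/-- The disjoint union of `k` triangles `kC₃`, on vertex set `Fin k × ZMod 3`. -/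
def Triangles (k : ℕ) : SimpleGraph (Fin k × ZMod 3) where
  Adj x y := x.1 = y.1 ∧ x.2 ≠ y.2
  symm := by refine ⟨?_⟩; rintro x y ⟨h1, h2⟩; exact ⟨h1.symm, h2.symm⟩
  loopless := by refine ⟨?_⟩; rintro x ⟨_, h⟩; exact h rfl

namespace FourC3Aux

/-- Target graph: rook's graph on `Fin 4 × Fin 4` minus the diagonal. -/
def Target : SimpleGraph {x : Fin 4 × Fin 4 // x.1 ≠ x.2} where
  Adj x y := x ≠ y ∧ (x.1.1 = y.1.1 ∨ x.1.2 = y.1.2)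
  symm := by refine ⟨?_⟩; rintro x y ⟨h1, h2⟩; exact ⟨h1.symm, by tauto⟩
  loopless := by refine ⟨?_⟩; rintro x ⟨h, _⟩; exact h rfl

lemma fin4_missing : ∀ a b c d : Fin 4, a ≠ b → a ≠ c → b ≠ c →
    ((d ≠ a ∧ d ≠ b ∧ d ≠ c) ↔ d = 6 - (a + b + c)) := by decide

lemma zmod3_forall (P : ZMod 3 → Prop) : (∀ a, P a) ↔ P 0 ∧ P 1 ∧ P 2 := by
  refine ⟨fun h => ⟨h 0, h 1, h 2⟩, fun ⟨h0, h1, h2⟩ a => ?_⟩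
  fin_cases a <;> assumption

lemma adj_iff (v w : Fin 4 × ZMod 3) :
    (Triangles 4).Adj v w ↔ v ≠ w ∧ v.1 = w.1 := by
  constructor
  · rintro ⟨h1, h2⟩
    exact ⟨fun h => h2 (by rw [h]), h1⟩
  · rintro ⟨h1, h2⟩
    exact ⟨h2, fun h => h1 (Prod.ext h2 h)⟩

section
variable (σ : Equiv.Perm (Fin 4 × ZMod 3)) (hσ : IsGraphEmbedding (Triangles 4) σ)

include hσ

lemma symm_emb : IsGraphEmbedding (Triangles 4) σ.symm := by
  intro x y hxy hs
  exact hσ _ _ hs (by simpa using hxy)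

lemma row_distinct {i : Fin 4} {a b : ZMod 3} (hab : a ≠ b) :
    (σ (i, a)).1 ≠ (σ (i, b)).1 := by
  intro h
  refine hσ (i, a) (i, b) ⟨rfl, hab⟩ ?_
  rw [adj_iff]
  exact ⟨fun hh => hab (by simpa using congrArg Prod.snd (σ.injective hh)), h⟩

omit hσ in
/-- the missing column of σ-row i -/
def pfun (i : Fin 4) : Fin 4 := 6 - ((σ (i, 0)).1 + (σ (i, 1)).1 + (σ (i, 2)).1)

lemma pfun_spec (i j : Fin 4) :
    pfun σ i = j ↔ ∀ a : ZMod 3, (σ (i, a)).1 ≠ j := by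
  rw [zmod3_forall (fun a => (σ (i, a)).1 ≠ j)]
  have h := fin4_missing (σ (i, 0)).1 (σ (i, 1)).1 (σ (i, 2)).1 j
    (row_distinct σ hσ (by decide)) (row_distinct σ hσ (by decide))
    (row_distinct σ hσ (by decide))
  constructor
  · intro hp
    have := h.mpr (by rw [← hp]; rfl)
    exact ⟨fun e => this.1 e.symm, fun e => this.2.1 e.symm, fun e => this.2.2 e.symm⟩
  · intro hj
    exact (h.mp ⟨fun e => hj.1 e.symm, fun e => hj.2.1 e.symm, fun e => hj.2.2 e.symm⟩).symm

omit hσ in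
lemma exists_iff (i j : Fin 4) :
    (∃ a : ZMod 3, (σ (i, a)).1 = j) ↔ ∃ b : ZMod 3, (σ.symm (j, b)).1 = i := by
  constructor
  · rintro ⟨a, ha⟩
    refine ⟨(σ (i, a)).2, ?_⟩
    have : (j, (σ (i, a)).2) = σ (i, a) := by rw [← ha]
    rw [this, Equiv.symm_apply_apply]
  · rintro ⟨b, hb⟩
    refine ⟨(σ.symm (j, b)).2, ?_⟩
    have : (i, (σ.symm (j, b)).2) = σ.symm (j, b) := by rw [← hb]
    rw [this, Equiv.apply_symm_apply]

lemma pq_link (i j : Fin 4) :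
    pfun σ i = j ↔ pfun σ.symm j = i := by
  rw [pfun_spec σ hσ, pfun_spec σ.symm (symm_emb σ hσ)]
  constructor
  · intro h b hb
    exact (not_exists.mpr h) ((exists_iff σ i j).mpr ⟨b, hb⟩)
  · intro h a ha
    exact (not_exists.mpr h) ((exists_iff σ i j).mp ⟨a, ha⟩)

lemma q_inj : Function.Injective (pfun σ.symm) := by
  intro j j' h
  have h1 := (pq_link σ hσ (pfun σ.symm j) j).mpr rfl
  have h2 := (pq_link σ hσ (pfun σ.symm j') j').mpr rfl
  rw [← h1, ← h2, h]

/-- `v ↦ (row v, col v)` is injective. -/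
lemma rc_inj (v w : Fin 4 × ZMod 3) (hr : (σ.symm v).1 = (σ.symm w).1)
    (hc : v.1 = w.1) : v = w := by
  by_contra hne
  have hadj : (Triangles 4).Adj v w := (adj_iff v w).mpr ⟨hne, hc⟩
  have hadj' : (Triangles 4).Adj (σ.symm v) (σ.symm w) :=
    (adj_iff _ _).mpr ⟨fun h => hne (by simpa using congrArg σ h), hr⟩
  exact hσ _ _ hadj' (by simpa using hadj)

/-- The vertex map to the target graph. -/
def F (v : Fin 4 × ZMod 3) : {x : Fin 4 × Fin 4 // x.1 ≠ x.2} :=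
  ⟨((σ.symm v).1, pfun σ.symm v.1), by
    intro h
    have := (pfun_spec σ.symm (symm_emb σ hσ) v.1 (σ.symm v).1).mp h.symm v.2
    exact this (by rw [show ((v.1 : Fin 4), v.2) = v from rfl])⟩

lemma F_inj : Function.Injective (F σ hσ) := by
  intro v w h
  have h1 : (σ.symm v).1 = (σ.symm w).1 := congrArg (fun x => x.1.1) h
  have h2 : pfun σ.symm v.1 = pfun σ.symm w.1 := congrArg (fun x => x.1.2) h
  exact rc_inj σ hσ v w h1 (q_inj σ hσ h2)

lemma F_bij : Function.Bijective (F σ hσ) := by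
  rw [Fintype.bijective_iff_injective_and_card]
  exact ⟨F_inj σ hσ, by decide⟩

lemma edgeSum_adj (v w : Fin 4 × ZMod 3) :
    (EdgeSum (Triangles 4) σ).Adj v w ↔
      v ≠ w ∧ (v.1 = w.1 ∨ (σ.symm v).1 = (σ.symm w).1) := by
  show (Triangles 4).Adj v w ∨ ((Triangles 4).map σ.toEmbedding).Adj v w ↔ _
  rw [SimpleGraph.map_adj, adj_iff]
  constructor
  · rintro (⟨h1, h2⟩ | ⟨a, b, hab, ha, hb⟩)
    · exact ⟨h1, Or.inl h2⟩
    · rw [adj_iff] at hab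
      have ha' : σ.symm v = a := by rw [← ha]; simp
      have hb' : σ.symm w = b := by rw [← hb]; simp
      refine ⟨fun h => hab.1 (by rw [← ha', ← hb', h]), Or.inr ?_⟩
      rw [ha', hb']; exact hab.2
  · rintro ⟨hne, h1 | h2⟩
    · exact Or.inl ⟨hne, h1⟩
    · refine Or.inr ⟨σ.symm v, σ.symm w, ?_, by simp, by simp⟩
      rw [adj_iff]
      exact ⟨fun h => hne (by simpa using congrArg σ h), h2⟩

noncomputable def iso_target : EdgeSum (Triangles 4) σ ≃g Target := by
  refine ⟨Equiv.ofBijective (F σ hσ) (F_bij σ hσ), ?_⟩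
  intro v w
  show Target.Adj (F σ hσ v) (F σ hσ w) ↔ _
  rw [edgeSum_adj σ hσ]
  constructor
  · rintro ⟨hne, h | h⟩
    · exact ⟨fun e => hne (by rw [e]), Or.inr h⟩
    · exact ⟨fun e => hne (by rw [e]), Or.inl (q_inj σ hσ h)⟩
  · rintro ⟨hne, h | h⟩
    · exact ⟨fun e => hne (F_inj σ hσ e), Or.inr (congrArg (pfun σ.symm) h)⟩
    · exact ⟨fun e => hne (F_inj σ hσ e), Or.inl h⟩

end

def σ₀ : Equiv.Perm (Fin 4 × ZMod 3) where
  toFun v := (v.1 + ⟨v.2.val, by have := ZMod.val_lt v.2; omega⟩, v.2)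
  invFun v := (v.1 - ⟨v.2.val, by have := ZMod.val_lt v.2; omega⟩, v.2)
  left_inv v := Prod.ext (add_sub_cancel_right _ _) rfl
  right_inv v := Prod.ext (sub_add_cancel _ _) rfl

instance : DecidableRel (Triangles 4).Adj := fun _ _ => inferInstanceAs (Decidable (_ ∧ _))

lemma σ₀_emb : IsGraphEmbedding (Triangles 4) σ₀ := by
  have : ∀ x y, (Triangles 4).Adj x y → ¬ (Triangles 4).Adj (σ₀ x) (σ₀ y) := by decide
  exact this

end FourC3Aux

/-- `4C₃` is uniquely embeddable: it admits an embedding and all edge-sum graphs over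
embeddings are pairwise isomorphic. -/
theorem four_c3_uniquely_embeddable :
    (∃ σ : Equiv.Perm (Fin 4 × ZMod 3), IsGraphEmbedding (Triangles 4) σ) ∧
    ∀ σ₁ σ₂ : Equiv.Perm (Fin 4 × ZMod 3),
      IsGraphEmbedding (Triangles 4) σ₁ → IsGraphEmbedding (Triangles 4) σ₂ →
      Nonempty (EdgeSum (Triangles 4) σ₁ ≃g EdgeSum (Triangles 4) σ₂) := by
  refine ⟨⟨FourC3Aux.σ₀, FourC3Aux.σ₀_emb⟩, fun σ₁ σ₂ h₁ h₂ => ?_⟩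
  exact ⟨(FourC3Aux.iso_target σ₁ h₁).trans (FourC3Aux.iso_target σ₂ h₂).symm⟩
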